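/- arXiv:2312.16789 — 2 statements merged into one kernel-verified Lean document; each statement's English description precedes it below -/
import Mathlib

section
/- Let μ_a and μ_{a*} be mutually absolutely continuous probability measures on X with finite KL divergences. Then the minimum of KL(ν, μ_{a*}) over all probability measures ν satisfying ∫ log(dμ_{a*}/dμ_a) dν ≤ −KL(μ_a, μ_{a*}) is attained at ν = μ_a and equals KL(μ_a, μ_{a*}). -/
open MeasureTheory
open scoped Classical

/-- Kullback–Leibler divergence: `∫ log (dν/dμ) dν` when `ν ≪ μ` and the integral is
well-defined, and `+∞` otherwise. -/
noncomputable def KL {X : Type*} [MeasurableSpace X] (ν μ : Measure X) : ENNReal :=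
  if ν ≪ μ ∧ Integrable (fun x => Real.log ((ν.rnDeriv μ x).toReal)) ν then
    ENNReal.ofReal (∫ x, Real.log ((ν.rnDeriv μ x).toReal) ∂ν)
  else ⊤

/-- Gibbs' inequality: the Kullback–Leibler integral is nonnegative. -/
lemma gibbs_aux {X : Type*} [MeasurableSpace X] (ν μ : Measure X)
    [IsProbabilityMeasure ν] [IsProbabilityMeasure μ] (h : ν ≪ μ)
    (hi : Integrable (llr ν μ) ν) :
    0 ≤ ∫ x, llr ν μ x ∂ν := by
  have hexp : (fun x => Real.exp (-llr ν μ x)) =ᵐ[ν] fun x => (μ.rnDeriv ν x).toReal :=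
    exp_neg_llr h
  have hint_exp : Integrable (fun x => Real.exp (-llr ν μ x)) ν :=
    Measure.integrable_toReal_rnDeriv.congr hexp.symm
  have hjensen : Real.exp (∫ x, -llr ν μ x ∂ν) ≤ ∫ x, Real.exp (-llr ν μ x) ∂ν := by
    refine convexOn_exp.map_integral_le Real.continuous_exp.continuousOn isClosed_univ
      (Filter.Eventually.of_forall fun x => Set.mem_univ _) hi.neg ?_
    exact hint_exp
  have hle1 : ∫ x, Real.exp (-llr ν μ x) ∂ν ≤ 1 := by
    rw [integral_congr_ae hexp]
    calc ∫ x, (μ.rnDeriv ν x).toReal ∂ν ≤ (μ Set.univ).toReal := by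
          rw [← setIntegral_univ]
          exact Measure.setIntegral_toReal_rnDeriv_le (measure_ne_top μ _)
      _ = 1 := by simp
  have := hjensen.trans hle1
  rw [Real.exp_le_one_iff, integral_neg, neg_nonpos] at this
  exact this

/-- The minimum of `KL(ν, μas)` over probability measures `ν` satisfying
`∫ log (dμas/dμa) dν ≤ −KL(μa, μas)` is attained at `ν = μa` and equals `KL(μa, μas)`. -/
theorem stmt1 {X : Type*} [MeasurableSpace X]
    (μa μas : Measure X) [IsProbabilityMeasure μa] [IsProbabilityMeasure μas]
    (h1 : μa ≪ μas) (h2 : μas ≪ μa)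
    (hfin1 : KL μa μas ≠ ⊤) (hfin2 : KL μas μa ≠ ⊤) :
    (∫ x, Real.log ((μas.rnDeriv μa x).toReal) ∂μa = -(KL μa μas).toReal) ∧
      ∀ ν : Measure X, IsProbabilityMeasure ν → ν ≪ μa → ν ≪ μas →
        Integrable (fun x => Real.log ((μas.rnDeriv μa x).toReal)) ν →
        (∫ x, Real.log ((μas.rnDeriv μa x).toReal) ∂ν) ≤ -(KL μa μas).toReal →
        KL μa μas ≤ KL ν μas := by
  have hcond : μa ≪ μas ∧ Integrable (fun x => Real.log ((μa.rnDeriv μas x).toReal)) μa := by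
    by_contra hc
    exact hfin1 (by rw [KL, if_neg hc])
  have hint1 : Integrable (llr μa μas) μa := hcond.2
  have hKLa : KL μa μas = ENNReal.ofReal (∫ x, llr μa μas x ∂μa) := by
    rw [KL, if_pos hcond]; rfl
  have hI0 : 0 ≤ ∫ x, llr μa μas x ∂μa := gibbs_aux μa μas h1 hint1
  have htoReal : (KL μa μas).toReal = ∫ x, llr μa μas x ∂μa := by
    rw [hKLa, ENNReal.toReal_ofReal hI0]
  have hneg : (fun x => Real.log ((μas.rnDeriv μa x).toReal)) =ᵐ[μa] fun x => -llr μa μas x := by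
    filter_upwards [neg_llr h1] with x hx
    exact hx.symm
  constructor
  · rw [integral_congr_ae hneg, integral_neg, htoReal]
  · intro ν hνprob hν1 hν2 hint hle
    rw [htoReal] at hle
    by_cases hcν : Integrable (fun x => Real.log ((ν.rnDeriv μas x).toReal)) ν
    swap
    · have : KL ν μas = ⊤ := by
        rw [KL, if_neg]
        intro hc
        exact hcν hc.2
      rw [this]; exact le_top
    have hintν : Integrable (llr ν μas) ν := hcν
    -- chain rule a.e. [ν]
    have hchain : llr ν μas =ᵐ[ν] fun x => llr ν μa x - llr μas μa x := by
      have hmul : ν.rnDeriv μa * μa.rnDeriv μas =ᵐ[μas] ν.rnDeriv μas :=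
        Measure.rnDeriv_mul_rnDeriv hν1
      filter_upwards [hν2.ae_le hmul, Measure.rnDeriv_pos hν1,
        hν1.ae_le (Measure.rnDeriv_lt_top ν μa), hν1.ae_le (Measure.rnDeriv_pos h1),
        hν2.ae_le (Measure.rnDeriv_lt_top μa μas), hν1.ae_le (neg_llr h1)] with x hx hpos hlt hpos2 hlt2 hnegx
      rw [llr, ← hx, Pi.mul_apply, ENNReal.toReal_mul,
        Real.log_mul (by simp [ENNReal.toReal_eq_zero_iff, hpos.ne', hlt.ne])
          (by simp [ENNReal.toReal_eq_zero_iff, hpos2.ne', hlt2.ne]), llr]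
      have : llr μas μa x = -llr μa μas x := by rw [← hnegx]; simp
      rw [this, llr]; ring
    have hintνa : Integrable (llr ν μa) ν := by
      have : (fun x => llr ν μas x + llr μas μa x) =ᵐ[ν] llr ν μa := by
        filter_upwards [hchain] with x hx
        rw [hx]; ring
      exact (hintν.add hint).congr this
    have hν0 : 0 ≤ ∫ x, llr ν μa x ∂ν := gibbs_aux ν μa hν1 hintνa
    have hKLν : KL ν μas = ENNReal.ofReal (∫ x, llr ν μas x ∂ν) := by
      rw [KL, if_pos ⟨hν2, hcν⟩]; rfl
    have hle' : ∫ x, llr μas μa x ∂ν ≤ -∫ x, llr μa μas x ∂μa := hle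
    rw [hKLa, hKLν]
    apply ENNReal.ofReal_le_ofReal
    calc ∫ x, llr μa μas x ∂μa ≤ 0 - ∫ x, llr μas μa x ∂ν := by
          rw [zero_sub]; linarith [hle']
      _ ≤ ∫ x, llr ν μa x ∂ν - ∫ x, llr μas μa x ∂ν := by linarith
      _ = ∫ x, llr ν μa x - llr μas μa x ∂ν := (integral_sub hintνa hint).symm
      _ = ∫ x, llr ν μas x ∂ν := (integral_congr_ae hchain).symm
end

section
/- For mutually absolutely continuous probability measures μ_0, μ_1 with μ_0 ≠ μ_1 and finite KL divergences, the Chernoff distance satisfies Ch(μ_0, μ_1) < KL(μ_0, μ_1) and Ch(μ_0, μ_1) = Ch(μ_1, μ_0). -/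
open MeasureTheory
open scoped Classical

/-- Chernoff distance: the infimum over probability measures `ν` of
`max {KL(ν, μ0), KL(ν, μ1)}`. -/
noncomputable def Ch {X : Type*} [MeasurableSpace X] (μ0 μ1 : Measure X) : ENNReal :=
  ⨅ (ν : Measure X) (_ : IsProbabilityMeasure ν), max (KL ν μ0) (KL ν μ1)

lemma gibbs {X : Type*} [MeasurableSpace X] (μ ν : Measure X)
    [IsProbabilityMeasure μ] [IsProbabilityMeasure ν]
    (hμν : μ ≪ ν) (hne : μ ≠ ν)
    (hi : Integrable (fun x => Real.log ((μ.rnDeriv ν x).toReal)) μ) :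
    0 < ∫ x, Real.log ((μ.rnDeriv ν x).toReal) ∂μ := by
  set r : X → ℝ := fun x => (μ.rnDeriv ν x).toReal with hr_def
  have hr_int : Integrable r ν := Measure.integrable_toReal_rnDeriv
  have hφ_int : Integrable (fun x => r x * Real.log (r x)) ν := by
    simpa [smul_eq_mul] using
      (integrable_rnDeriv_smul_iff (f := fun x => Real.log (r x)) hμν).mpr hi
  have havg : ∫ x, r x ∂ν = 1 := by
    rw [hr_def, Measure.integral_toReal_rnDeriv hμν]; simp
  have htrans : ∫ x, r x * Real.log (r x) ∂ν = ∫ x, Real.log (r x) ∂μ := by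
    simpa [smul_eq_mul] using
      integral_rnDeriv_smul (f := fun x => Real.log (r x)) hμν
  rcases Real.strictConvexOn_mul_log.ae_eq_const_or_map_average_lt
      Real.continuous_mul_log.continuousOn isClosed_Ici
      (Filter.Eventually.of_forall fun x => ENNReal.toReal_nonneg) hr_int hφ_int with h | h
  · exfalso
    rw [average_eq_integral, havg] at h
    have h1 : μ.rnDeriv ν =ᵐ[ν] 1 := by
      filter_upwards [h, Measure.rnDeriv_lt_top μ ν] with x hx hlt
      simp only [Function.const_apply] at hx
      have : (μ.rnDeriv ν x).toReal = 1 := hx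
      rw [ENNReal.toReal_eq_one_iff] at this
      simpa using this
    apply hne
    calc μ = ν.withDensity (μ.rnDeriv ν) := (Measure.withDensity_rnDeriv_eq μ ν hμν).symm
      _ = ν.withDensity 1 := withDensity_congr_ae h1
      _ = ν := by simp
  · rw [average_eq_integral, average_eq_integral, havg] at h
    simp only [Real.log_one, mul_zero] at h
    rw [← htrans]
    exact h

lemma KL_mix_le {X : Type*} [MeasurableSpace X] (μ ν : Measure X)
    [IsProbabilityMeasure μ] [IsProbabilityMeasure ν]
    (hμν : μ ≪ ν) {a b : ℝ} (ha : 0 < a) (hb : 0 < b) (hab : a + b = 1)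
    (hi : Integrable (fun x => Real.log ((μ.rnDeriv ν x).toReal)) μ) :
    KL (ENNReal.ofReal a • μ + ENNReal.ofReal b • ν) ν
      ≤ ENNReal.ofReal (a * ∫ x, Real.log ((μ.rnDeriv ν x).toReal) ∂μ) := by
  set pp : Measure X := ENNReal.ofReal a • μ + ENNReal.ofReal b • ν with hpp_def
  set r : X → ℝ := fun x => (μ.rnDeriv ν x).toReal with hr_def
  set w : X → ℝ := fun x => a * r x + b with hw_def
  have hmeas_r : Measurable r := (Measure.measurable_rnDeriv μ ν).ennreal_toReal
  have hmeas_w : Measurable w := (hmeas_r.const_mul a).add measurable_const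
  have hr_nonneg : ∀ x, 0 ≤ r x := fun x => ENNReal.toReal_nonneg
  have hb_le_w : ∀ x, b ≤ w x := fun x =>
    le_add_of_nonneg_left (mul_nonneg ha.le (hr_nonneg x))
  have hw_pos : ∀ x, 0 < w x := fun x => lt_of_lt_of_le hb (hb_le_w x)
  have hr_int : Integrable r ν := Measure.integrable_toReal_rnDeriv
  have hw_int : Integrable w ν := (hr_int.const_mul a).add (integrable_const b)
  have hφr_int : Integrable (fun x => r x * Real.log (r x)) ν := by
    simpa [smul_eq_mul] using
      (integrable_rnDeriv_smul_iff (f := fun x => Real.log (r x)) hμν).mpr hi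
  -- pp is a probability measure and pp ≪ ν
  have hppν : pp ≪ ν := by
    refine Measure.AbsolutelyContinuous.mk fun s hs h0 => ?_
    simp [hpp_def, Measure.add_apply, Measure.smul_apply, hμν h0, h0]
  haveI hpp_fin : IsFiniteMeasure (ENNReal.ofReal a • μ) := by
    constructor
    simp only [Measure.smul_apply, smul_eq_mul, measure_univ, mul_one]
    exact ENNReal.ofReal_lt_top
  haveI hpp_fin' : IsFiniteMeasure (ENNReal.ofReal b • ν) := by
    constructor
    simp only [Measure.smul_apply, smul_eq_mul, measure_univ, mul_one]
    exact ENNReal.ofReal_lt_top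
  -- rnDeriv of pp
  have hd : pp.rnDeriv ν =ᵐ[ν] fun x => ENNReal.ofReal a * μ.rnDeriv ν x + ENNReal.ofReal b := by
    have h1 := Measure.rnDeriv_add (ENNReal.ofReal a • μ) (ENNReal.ofReal b • ν) ν
    have h2 := Measure.rnDeriv_smul_left_of_ne_top μ ν (r := ENNReal.ofReal a)
      ENNReal.ofReal_ne_top
    have h3 := Measure.rnDeriv_smul_left_of_ne_top ν ν (r := ENNReal.ofReal b)
      ENNReal.ofReal_ne_top
    have h4 := Measure.rnDeriv_self ν
    filter_upwards [h1, h2, h3, h4] with x e1 e2 e3 e4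
    simp only [hpp_def, e1, Pi.add_apply, e2, e3, Pi.smul_apply, smul_eq_mul, e4, mul_one]
  have htr : (fun x => (pp.rnDeriv ν x).toReal) =ᵐ[ν] w := by
    filter_upwards [hd, Measure.rnDeriv_lt_top μ ν] with x e hlt
    rw [e, ENNReal.toReal_add (ENNReal.mul_ne_top ENNReal.ofReal_ne_top hlt.ne)
      ENNReal.ofReal_ne_top, ENNReal.toReal_mul, ENNReal.toReal_ofReal ha.le,
      ENNReal.toReal_ofReal hb.le]
  have htrpp : (fun x => (pp.rnDeriv ν x).toReal) =ᵐ[pp] w := htr.filter_mono hppν.ae_le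
  -- integrability of log w
  have hlog_int_ν : Integrable (fun x => Real.log (w x)) ν := by
    refine Integrable.mono' ((hw_int.sub (integrable_const 1)).abs.add (integrable_const |Real.log b|))
      (Real.measurable_log.comp hmeas_w).aestronglyMeasurable ?_
    refine Filter.Eventually.of_forall fun x => ?_
    rw [Real.norm_eq_abs, abs_le]
    constructor
    · have h1 : Real.log b ≤ Real.log (w x) := Real.log_le_log hb (hb_le_w x)
      have h2 := neg_abs_le (Real.log b)
      have h3 := abs_nonneg (w x - 1)
      simp only [Pi.add_apply, Pi.abs_apply, Pi.sub_apply, Pi.one_apply]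
      linarith
    · have h1 : Real.log (w x) ≤ w x - 1 := Real.log_le_sub_one_of_pos (hw_pos x)
      have h2 := le_abs_self (w x - 1)
      have h3 := abs_nonneg (Real.log b)
      simp only [Pi.add_apply, Pi.abs_apply, Pi.sub_apply, Pi.one_apply]
      linarith
  have hlog_int_μ : Integrable (fun x => Real.log (w x)) μ := by
    refine Integrable.mono' (hi.abs.add (integrable_const |Real.log a|))
      (Real.measurable_log.comp hmeas_w).aestronglyMeasurable ?_
    filter_upwards [hμν.ae_le (Measure.rnDeriv_lt_top μ ν), Measure.rnDeriv_pos hμν]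
      with x hlt hpos
    have hr_pos : 0 < r x := ENNReal.toReal_pos hpos.ne' hlt.ne
    rw [Real.norm_eq_abs, abs_le]
    constructor
    · have h1 : Real.log (a * r x) ≤ Real.log (w x) :=
        Real.log_le_log (mul_pos ha hr_pos) (le_add_of_nonneg_right hb.le)
      rw [Real.log_mul ha.ne' hr_pos.ne'] at h1
      have h2 := neg_abs_le (Real.log a)
      have h3 := neg_abs_le (Real.log (r x))
      simp only [Pi.add_apply, Pi.abs_apply]
      linarith
    · have hup : Real.log (w x) ≤ |Real.log (r x)| := by
        by_cases h1 : 1 ≤ r x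
        · have hwr : w x ≤ r x := by
            have h2 : a * r x + b * r x = r x := by rw [← add_mul, hab, one_mul]
            have h3 : b * 1 ≤ b * r x := mul_le_mul_of_nonneg_left h1 hb.le
            have hwx : w x = a * r x + b := rfl
            linarith
          calc Real.log (w x) ≤ Real.log (r x) := Real.log_le_log (hw_pos x) hwr
            _ ≤ |Real.log (r x)| := le_abs_self _
        · push_neg at h1
          have hw1 : w x ≤ 1 := by
            have h3 : a * r x ≤ a * 1 := mul_le_mul_of_nonneg_left h1.le ha.le
            have hwx : w x = a * r x + b := rfl
            linarith
          calc Real.log (w x) ≤ 0 := Real.log_nonpos (hw_pos x).le hw1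
            _ ≤ |Real.log (r x)| := abs_nonneg _
      have h3 := abs_nonneg (Real.log a)
      simp only [Pi.add_apply, Pi.abs_apply]
      linarith
  have hlog_int_pp : Integrable (fun x => Real.log (w x)) pp := by
    rw [hpp_def, integrable_add_measure]
    constructor
    · exact (integrable_smul_measure (by simpa using ha) ENNReal.ofReal_ne_top).2 hlog_int_μ
    · exact (integrable_smul_measure (by simpa using hb) ENNReal.ofReal_ne_top).2 hlog_int_ν
  have htrpp_log : (fun x => Real.log ((pp.rnDeriv ν x).toReal)) =ᵐ[pp] fun x => Real.log (w x) :=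
    htrpp.fun_comp Real.log
  have hcond : pp ≪ ν ∧ Integrable (fun x => Real.log ((pp.rnDeriv ν x).toReal)) pp :=
    ⟨hppν, hlog_int_pp.congr htrpp_log.symm⟩
  -- value of KL
  rw [KL, if_pos hcond]
  apply ENNReal.ofReal_le_ofReal
  have hval : ∫ x, Real.log ((pp.rnDeriv ν x).toReal) ∂pp = ∫ x, Real.log (w x) ∂pp :=
    integral_congr_ae htrpp_log
  rw [hval]
  -- split the integral over pp
  have hsplit : ∫ x, Real.log (w x) ∂pp
      = a * ∫ x, Real.log (w x) ∂μ + b * ∫ x, Real.log (w x) ∂ν := by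
    rw [hpp_def, integral_add_measure
      ((integrable_smul_measure (by simpa using ha) ENNReal.ofReal_ne_top).2 hlog_int_μ)
      ((integrable_smul_measure (by simpa using hb) ENNReal.ofReal_ne_top).2 hlog_int_ν),
      integral_smul_measure, integral_smul_measure, ENNReal.toReal_ofReal ha.le,
      ENNReal.toReal_ofReal hb.le, smul_eq_mul, smul_eq_mul]
  have hrlogw_int : Integrable (fun x => r x * Real.log (w x)) ν := by
    simpa [smul_eq_mul] using
      (integrable_rnDeriv_smul_iff (f := fun x => Real.log (w x)) hμν).mpr hlog_int_μ
  have hμtransfer : ∫ x, Real.log (w x) ∂μ = ∫ x, r x * Real.log (w x) ∂ν := by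
    refine Eq.symm ?_
    simpa [smul_eq_mul] using
      integral_rnDeriv_smul (f := fun x => Real.log (w x)) hμν
  have hφw_int : Integrable (fun x => w x * Real.log (w x)) ν := by
    refine ((hrlogw_int.const_mul a).add (hlog_int_ν.const_mul b)).congr ?_
    exact Filter.Eventually.of_forall fun x => by simp only [Pi.add_apply]; ring
  have hcombine : ∫ x, Real.log (w x) ∂pp = ∫ x, w x * Real.log (w x) ∂ν := by
    rw [hsplit, hμtransfer, ← integral_const_mul, ← integral_const_mul,
      ← integral_add (hrlogw_int.const_mul a) (hlog_int_ν.const_mul b)]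
    exact integral_congr_ae (Filter.Eventually.of_forall fun x => by
      simp only [hw_def]; ring)
  rw [hcombine]
  -- convexity bound
  have hbound : ∫ x, w x * Real.log (w x) ∂ν ≤ ∫ x, a * (r x * Real.log (r x)) ∂ν := by
    refine integral_mono_ae hφw_int (hφr_int.const_mul a) ?_
    refine Filter.Eventually.of_forall fun x => ?_
    have := Real.convexOn_mul_log.2 (Set.mem_Ici.2 (hr_nonneg x))
      (Set.mem_Ici.2 (zero_le_one)) ha.le hb.le hab
    simpa [smul_eq_mul, Real.log_one] using this
  calc ∫ x, w x * Real.log (w x) ∂ν ≤ ∫ x, a * (r x * Real.log (r x)) ∂ν := hbound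
    _ = a * ∫ x, r x * Real.log (r x) ∂ν := integral_const_mul a _
    _ = a * ∫ x, Real.log (r x) ∂μ := by
        congr 1
        simpa [smul_eq_mul] using
          integral_rnDeriv_smul (f := fun x => Real.log (r x)) hμν

/-- For mutually absolutely continuous probability measures `μ0 ≠ μ1` with finite KL
divergences: `Ch(μ0, μ1) < KL(μ0, μ1)` and `Ch(μ0, μ1) = Ch(μ1, μ0)`. -/
theorem stmt3 {X : Type*} [MeasurableSpace X]
    (μ0 μ1 : Measure X) [IsProbabilityMeasure μ0] [IsProbabilityMeasure μ1]
    (h01 : μ0 ≪ μ1) (h10 : μ1 ≪ μ0) (hne : μ0 ≠ μ1)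
    (hf1 : KL μ0 μ1 ≠ ⊤) (hf2 : KL μ1 μ0 ≠ ⊤) :
    Ch μ0 μ1 < KL μ0 μ1 ∧ Ch μ0 μ1 = Ch μ1 μ0 := by
  have hi0 : Integrable (fun x => Real.log ((μ0.rnDeriv μ1 x).toReal)) μ0 := by
    by_contra h
    exact hf1 (by rw [KL, if_neg (fun hc => h hc.2)])
  have hi1 : Integrable (fun x => Real.log ((μ1.rnDeriv μ0 x).toReal)) μ1 := by
    by_contra h
    exact hf2 (by rw [KL, if_neg (fun hc => h hc.2)])
  set I0 := ∫ x, Real.log ((μ0.rnDeriv μ1 x).toReal) ∂μ0 with hI0_def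
  set I1 := ∫ x, Real.log ((μ1.rnDeriv μ0 x).toReal) ∂μ1 with hI1_def
  have hI0pos : 0 < I0 := gibbs μ0 μ1 h01 hne hi0
  have hI1pos : 0 < I1 := gibbs μ1 μ0 h10 (Ne.symm hne) hi1
  have hKL0 : KL μ0 μ1 = ENNReal.ofReal I0 := by rw [KL, if_pos ⟨h01, hi0⟩]
  constructor
  · set b : ℝ := I0 / (2 * (I0 + I1)) with hb_def
    have hsum : 0 < I0 + I1 := by linarith
    have hb : 0 < b := by positivity
    have hbe : b * (2 * (I0 + I1)) = I0 := by
      rw [hb_def]; field_simp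
    have hblt : b < 1 / 2 := by
      rw [hb_def, div_lt_iff₀ (by linarith)]
      linarith
    set a : ℝ := 1 - b with ha_def
    have ha : 0 < a := by rw [ha_def]; linarith
    have hab : a + b = 1 := by rw [ha_def]; ring
    set pp : Measure X := ENNReal.ofReal a • μ0 + ENNReal.ofReal b • μ1 with hpp_def
    have hpp_prob : IsProbabilityMeasure pp := by
      constructor
      simp [hpp_def, Measure.add_apply, Measure.smul_apply, smul_eq_mul, measure_univ,
        ← ENNReal.ofReal_add ha.le hb.le, hab]
    have h1 : KL pp μ1 ≤ ENNReal.ofReal (a * I0) := KL_mix_le μ0 μ1 h01 ha hb hab hi0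
    have h2 : KL pp μ0 ≤ ENNReal.ofReal (b * I1) := by
      have h3 := KL_mix_le μ1 μ0 h10 hb ha (by linarith) hi1
      rwa [add_comm (ENNReal.ofReal b • μ1) (ENNReal.ofReal a • μ0)] at h3
    have hch : Ch μ0 μ1 ≤ max (KL pp μ0) (KL pp μ1) := iInf₂_le pp hpp_prob
    refine lt_of_le_of_lt hch ?_
    rw [hKL0]
    apply max_lt
    · refine lt_of_le_of_lt h2 ?_
      rw [ENNReal.ofReal_lt_ofReal_iff hI0pos]
      have h4 : I1 < 2 * (I0 + I1) := by linarith
      nlinarith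
    · refine lt_of_le_of_lt h1 ?_
      rw [ENNReal.ofReal_lt_ofReal_iff hI0pos]
      nlinarith
  · exact iInf_congr fun ν => iInf_congr fun _ => max_comm _ _
end
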